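/- Let a > 2, C ≥ 0, k ∈ ℕ and X₀ ∈ ℝ. Let h be holomorphic on the half-plane H = {s ∈ ℂ : Re s > X₀} and satisfy |h(s+1) − h(s)| ≤ C·|s|^{−a} and |h(s)| ≤ C·(1 + |Im s|)^k for all s ∈ H. Then there exist λ∞ ∈ ℂ and K ≥ 0 such that |h(s) − λ∞| ≤ K·(log(2 + Re s))²·(Re s)^{1−a} for all s ∈ H with Re s ≥ X₀ + 2 and Re s ≥ 2. In particular h(s) → λ∞ uniformly in Im s as Re s → +∞. -/

import Mathlib

open Filter Real Topology

/-- binomial-type limit: `(1+log x)^k / x → 0`. -/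
lemma aux_log_pow_div_basic (k : ℕ) :
    Tendsto (fun x : ℝ => (1 + Real.log x) ^ k / x) atTop (𝓝 0) := by
  have hform : ∀ x : ℝ, (1 + Real.log x) ^ k / x
      = ∑ j ∈ Finset.range (k + 1), (Real.log x ^ (k - j) * (k.choose j)) / x := by
    intro x
    rw [add_pow]
    rw [Finset.sum_div]
    congr 1 with j
    ring
  simp only [hform]
  have : Tendsto (fun x : ℝ => ∑ j ∈ Finset.range (k+1),
      (Real.log x ^ (k - j) * (k.choose j)) / x) atTop (𝓝 (∑ j ∈ Finset.range (k+1), 0)) := by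
    apply tendsto_finset_sum
    intro j _
    have h := Real.tendsto_pow_log_div_mul_add_atTop 1 0 (k - j) one_ne_zero
    simp only [one_mul, add_zero] at h
    have := h.const_mul ((k.choose j : ℝ))
    simpa [mul_comm, mul_div_assoc] using this
  simpa using this

/-- `(c₀ (1+log(c₃+x))^k + c₂)/x → 0` at `+∞`. -/
lemma aux_log_pow_div (k : ℕ) (c₀ c₂ c₃ : ℝ) :
    Tendsto (fun x : ℝ => (c₀ * (1 + Real.log (c₃ + x)) ^ k + c₂) / x) atTop (𝓝 0) := by
  have h1 : Tendsto (fun x : ℝ => c₃ + x) atTop atTop := tendsto_atTop_add_const_left _ _ tendsto_id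
  have h2 : Tendsto (fun x : ℝ => (1 + Real.log (c₃ + x)) ^ k / (c₃ + x)) atTop (𝓝 0) :=
    (aux_log_pow_div_basic k).comp h1
  have h3 : Tendsto (fun x : ℝ => (c₃ + x) / x) atTop (𝓝 1) := by
    have : Tendsto (fun x : ℝ => c₃ * x⁻¹ + 1) atTop (𝓝 (c₃ * 0 + 1)) :=
      (tendsto_inv_atTop_zero.const_mul c₃).add tendsto_const_nhds
    rw [mul_zero, zero_add] at this
    apply this.congr'
    filter_upwards [eventually_gt_atTop 0] with x hx
    field_simp
  have h4 : Tendsto (fun x : ℝ => c₂ / x) atTop (𝓝 0) := by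
    simpa [div_eq_mul_inv] using tendsto_inv_atTop_zero.const_mul c₂
  have h5 : Tendsto (fun x : ℝ =>
      c₀ * ((1 + Real.log (c₃ + x)) ^ k / (c₃ + x)) * ((c₃ + x) / x) + c₂ / x) atTop
      (𝓝 (c₀ * 0 * 1 + 0)) := (((h2.const_mul c₀).mul h3)).add h4
  rw [mul_zero, zero_mul, zero_add] at h5
  apply h5.congr'
  filter_upwards [eventually_gt_atTop (max 0 (1 - c₃))] with x hx
  have hx0 : 0 < x := lt_of_le_of_lt (le_max_left _ _) hx
  have hcx : 0 < c₃ + x := by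
    have := lt_of_le_of_lt (le_max_right _ _) hx
    linarith
  field_simp

/-- `(c₀ (1+|log t|)^k + c₂) * t → 0` as `t → 0⁺`. -/
lemma aux_mul_log_pow_tendsto (k : ℕ) (c₀ c₂ : ℝ) :
    Tendsto (fun t : ℝ => (c₀ * (1 + |Real.log t|) ^ k + c₂) * t) (𝓝[>] (0:ℝ)) (𝓝 0) := by
  have h1 : Tendsto (fun t : ℝ => t⁻¹) (𝓝[>] (0:ℝ)) atTop := tendsto_inv_nhdsGT_zero
  have h2 := (aux_log_pow_div k c₀ c₂ 0).comp h1
  apply h2.congr'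
  filter_upwards [Ioo_mem_nhdsGT_of_mem (by norm_num : (0:ℝ) ∈ Set.Ico 0 1)] with t ht
  obtain ⟨ht0, ht1⟩ := ht
  have hlog : Real.log t ≤ 0 := Real.log_nonpos ht0.le ht1.le
  have : Real.log (0 + t⁻¹) = |Real.log t| := by
    rw [zero_add, Real.log_inv, abs_of_nonpos hlog]
  simp only [Function.comp, this]
  rw [div_inv_eq_mul]

open Filter Real Topology Finset

lemma aux_mvt {a : ℝ} (ha : 1 < a) {y : ℝ} (hy : 2 ≤ y) :
    (a - 1) * y ^ (-a) ≤ (y - 1) ^ (1 - a) - y ^ (1 - a) := by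
  have h1 : (1:ℝ) ≤ y - 1 := by linarith
  have hd : ∀ t ∈ Set.Ioo (y - 1) y, HasDerivAt (fun t : ℝ => t ^ (1 - a))
      ((1 - a) * t ^ (-a)) t := by
    intro t ht
    have ht0 : t ≠ 0 := by
      have : (1:ℝ) < t := lt_of_le_of_lt h1 ht.1
      linarith
    have := Real.hasDerivAt_rpow_const (p := 1 - a) (Or.inl ht0)
    convert this using 2
    ring_nf
  have hc : ContinuousOn (fun t : ℝ => t ^ (1 - a)) (Set.Icc (y - 1) y) := by
    intro t ht
    have ht0 : t ≠ 0 := by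
      have : (1:ℝ) ≤ t := le_trans h1 ht.1
      linarith
    exact ((Real.hasDerivAt_rpow_const (p := 1 - a) (Or.inl ht0)).continuousAt).continuousWithinAt
  obtain ⟨c, hc1, hc2⟩ := exists_hasDerivAt_eq_slope (fun t : ℝ => t ^ (1 - a))
    (fun t => (1 - a) * t ^ (-a)) (by linarith : y - 1 < y) hc hd
  have hcy : 0 < c := by have := hc1.1; linarith
  have hkey : y ^ (1 - a) - (y - 1) ^ (1 - a) = (1 - a) * c ^ (-a) := by
    rw [hc2]; field_simp; ring
  have hmono : y ^ (-a) ≤ c ^ (-a) :=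
    Real.rpow_le_rpow_of_nonpos hcy hc1.2.le (by linarith)
  nlinarith [hmono, hkey]

lemma aux_partial {a x : ℝ} (ha : 1 < a) (hx : 1 ≤ x) (N : ℕ) :
    ∑ n ∈ range N, (x + n + 1) ^ (-a) ≤ (x ^ (1 - a) - (x + N) ^ (1 - a)) / (a - 1) := by
  induction N with
  | zero => simp
  | succ N ih =>
    rw [Finset.sum_range_succ]
    have hy : (2:ℝ) ≤ x + N + 1 := by
      have : (0:ℝ) ≤ N := Nat.cast_nonneg N
      linarith
    have hmvt := aux_mvt ha hy
    have ha1 : (0:ℝ) < a - 1 := by linarith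
    have h2 : (x + ↑N + 1) ^ (-a) ≤ ((x + N) ^ (1-a) - (x + N + 1) ^ (1-a)) / (a - 1) := by
      rw [le_div_iff₀ ha1]
      have : (x + ↑N + 1) - 1 = x + N := by ring
      calc (x + ↑N + 1) ^ (-a) * (a - 1) = (a - 1) * (x + ↑N + 1) ^ (-a) := by ring
        _ ≤ (x + ↑N + 1 - 1) ^ (1-a) - (x + ↑N + 1) ^ (1-a) := hmvt
        _ = (x + N) ^ (1-a) - (x + N + 1) ^ (1-a) := by rw [this]
    have hcast : ((N + 1 : ℕ) : ℝ) = (N : ℝ) + 1 := by push_cast; ring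
    rw [hcast]
    calc ∑ n ∈ range N, (x + n + 1) ^ (-a) + (x + ↑N + 1) ^ (-a)
        ≤ (x ^ (1-a) - (x + N) ^ (1-a)) / (a-1)
          + ((x + N) ^ (1-a) - (x + N + 1) ^ (1-a)) / (a-1) := add_le_add ih h2
      _ = (x ^ (1-a) - (x + (N + 1)) ^ (1-a)) / (a-1) := by rw [← add_div]; ring_nf

lemma aux_tsum_summable {a x : ℝ} (ha : 1 < a) (hx : 1 ≤ x) :
    Summable (fun n : ℕ => (x + n) ^ (-a)) := by
  have hx0 : (0:ℝ) < x := by linarith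
  apply summable_of_sum_range_le (c := x ^ (-a) + x ^ (1 - a) / (a - 1))
  · intro n
    have : (0:ℝ) ≤ x + n := by have := Nat.cast_nonneg (α := ℝ) n; linarith
    exact Real.rpow_nonneg this _
  · intro N
    cases N with
    | zero =>
      simp only [Finset.range_zero, Finset.sum_empty]
      have h1 : (0:ℝ) ≤ x ^ (1-a)/(a-1) := div_nonneg (Real.rpow_nonneg hx0.le _) (by linarith)
      have h2 : (0:ℝ) ≤ x ^ (-a) := Real.rpow_nonneg hx0.le _
      linarith
    | succ M =>
      rw [Finset.sum_range_succ']
      have h1 : ∑ n ∈ range M, (x + ↑(n + 1)) ^ (-a) ≤ x ^ (1-a) / (a-1) := by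
        have := aux_partial ha hx M
        have h2 : (0:ℝ) ≤ (x + M) ^ (1-a) := by positivity
        have h3 : (x ^ (1-a) - (x + M) ^ (1-a)) / (a-1) ≤ x ^ (1-a) / (a-1) := by
          apply div_le_div_of_nonneg_right ?_ (by linarith)
          · linarith
        calc ∑ n ∈ range M, (x + ↑(n + 1)) ^ (-a)
            = ∑ n ∈ range M, (x + n + 1) ^ (-a) := by
              apply Finset.sum_congr rfl; intro n _; push_cast; ring_nf
          _ ≤ _ := le_trans this h3
      have : (x + ↑(0:ℕ)) ^ (-a) = x ^ (-a) := by norm_num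
      rw [this]
      linarith

lemma aux_tsum_le {a x : ℝ} (ha : 1 < a) (hx : 1 ≤ x) :
    ∑' n : ℕ, (x + n) ^ (-a) ≤ (1 + (a - 1)⁻¹) * x ^ (1 - a) := by
  have hx0 : (0:ℝ) < x := by linarith
  have hb : ∑' n : ℕ, (x + n) ^ (-a) ≤ x ^ (-a) + x ^ (1 - a) / (a - 1) := by
    apply Real.tsum_le_of_sum_range_le (fun n => Real.rpow_nonneg (by have := Nat.cast_nonneg (α := ℝ) n; linarith) _)
    intro N
    cases N with
    | zero =>
      simp only [Finset.range_zero, Finset.sum_empty]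
      have h1 : (0:ℝ) ≤ x ^ (1-a)/(a-1) := div_nonneg (Real.rpow_nonneg hx0.le _) (by linarith)
      have h2 : (0:ℝ) ≤ x ^ (-a) := Real.rpow_nonneg hx0.le _
      linarith
    | succ M =>
      rw [Finset.sum_range_succ']
      have h1 : ∑ n ∈ range M, (x + ↑(n + 1)) ^ (-a) ≤ x ^ (1-a) / (a-1) := by
        have := aux_partial ha hx M
        have h2 : (0:ℝ) ≤ (x + M) ^ (1-a) := by positivity
        have h3 : (x ^ (1-a) - (x + M) ^ (1-a)) / (a-1) ≤ x ^ (1-a) / (a-1) := by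
          apply div_le_div_of_nonneg_right ?_ (by linarith)
          · linarith
        calc ∑ n ∈ range M, (x + ↑(n + 1)) ^ (-a)
            = ∑ n ∈ range M, (x + n + 1) ^ (-a) := by
              apply Finset.sum_congr rfl; intro n _; push_cast; ring_nf
          _ ≤ _ := le_trans this h3
      have : (x + ↑(0:ℕ)) ^ (-a) = x ^ (-a) := by norm_num
      rw [this]
      linarith
  have hxa : x ^ (-a) ≤ x ^ (1 - a) :=
    Real.rpow_le_rpow_of_exponent_le hx (by linarith)
  have ha1 : (0:ℝ) < a - 1 := by linarith
  calc ∑' n : ℕ, (x + n) ^ (-a) ≤ x ^ (-a) + x ^ (1-a) / (a-1) := hb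
    _ ≤ x ^ (1-a) + x ^ (1-a) * (a-1)⁻¹ := by
        rw [div_eq_mul_inv]; exact add_le_add hxa le_rfl
    _ = (1 + (a-1)⁻¹) * x ^ (1-a) := by ring

open Complex in
/-- A 1-periodic entire function with polynomial growth in the imaginary
direction is constant. -/
lemma periodic_growth_constant (G : ℂ → ℂ) (hGd : Differentiable ℂ G)
    (hGper : ∀ s, G (s + 1) = G s) (c₀ c₂ : ℝ) (k : ℕ)
    (hc₀ : 0 ≤ c₀) (hc₂ : 0 ≤ c₂)
    (hGb : ∀ s : ℂ, ‖G s‖ ≤ c₀ * (1 + |s.im|) ^ k + c₂) :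
    ∀ s t : ℂ, G s = G t := by
  have h2piI : (2 * (π:ℂ) * I) ≠ 0 := by
    simp [Real.pi_ne_zero, Complex.I_ne_zero]
  have hperZ : ∀ (s : ℂ) (n : ℤ), G (s + n) = G s := by
    intro s n
    have hp : Function.Periodic G 1 := hGper
    simpa using (hp.int_mul n) s
  -- Step A
  have stepA : ∀ (z w : ℂ), z ≠ 0 → Complex.exp (2 * π * I * w) = z →
      G (Complex.log z / (2 * π * I)) = G w := by
    intro z w hz hw
    have h1 : Complex.exp (Complex.log z) = Complex.exp (2 * π * I * w) := by
      rw [Complex.exp_log hz, hw]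
    obtain ⟨n, hn⟩ := Complex.exp_eq_exp_iff_exists_int.mp h1
    have h2 : Complex.log z / (2 * π * I) = w + n := by
      rw [hn]; field_simp
    rw [h2, hperZ]
  set F : ℂ → ℂ := fun z => G (Complex.log z / (2 * π * I)) with hF
  have hFeq : ∀ s : ℂ, F (Complex.exp (2 * π * I * s)) = G s := fun s =>
    stepA _ s (Complex.exp_ne_zero _) rfl
  -- alternative representation near the negative axis
  have hF2 : ∀ z : ℂ, z ≠ 0 → F z = G (Complex.log (-z) / (2 * π * I) + 1/2) := by
    intro z hz
    apply stepA z _ hz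
    have : 2 * (π:ℂ) * I * (Complex.log (-z) / (2 * π * I) + 1/2)
        = Complex.log (-z) + π * I := by field_simp
    rw [this, Complex.exp_add, Complex.exp_log (neg_ne_zero.mpr hz), Complex.exp_pi_mul_I]
    ring
  -- differentiability away from 0
  have hFd : ∀ z : ℂ, z ≠ 0 → DifferentiableAt ℂ F z := by
    intro z hz
    by_cases hsp : z ∈ Complex.slitPlane
    · exact (hGd _).comp z ((Complex.differentiableAt_log hsp).div_const _)
    · have hnz : -z ∈ Complex.slitPlane := by
        rw [Complex.mem_slitPlane_iff] at hsp ⊢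
        push_neg at hsp
        have hre : z.re < 0 := by
          rcases lt_or_eq_of_le hsp.1 with h | h
          · exact h
          · exfalso; apply hz; apply Complex.ext
            · simpa using h
            · simpa using hsp.2
        left; simp [hre]
      have hd2 : DifferentiableAt ℂ (fun w => G (Complex.log (-w) / (2 * π * I) + 1/2)) z := by
        apply (hGd _).comp
        apply DifferentiableAt.add_const
        apply DifferentiableAt.div_const
        exact (Complex.differentiableAt_log hnz).comp z differentiable_neg.differentiableAt
      apply hd2.congr_of_eventuallyEq
      have hmem : {w : ℂ | w ≠ 0} ∈ nhds z := isOpen_compl_singleton.mem_nhds hz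
      filter_upwards [hmem] with w hw
      exact hF2 w hw
  -- norm bound for F
  have hFb : ∀ z : ℂ, z ≠ 0 →
      ‖F z‖ ≤ c₀ * (1 + |Real.log (‖z‖)|) ^ k + c₂ := by
    intro z hz
    have him : (Complex.log z / (2 * π * I)).im = -(Real.log (‖z‖)) / (2 * π) := by
      rw [Complex.div_im]
      simp [Complex.log_re, Complex.log_im, Complex.normSq_apply]
      field_simp [Real.pi_ne_zero]
    have h1 : |(Complex.log z / (2 * π * I)).im| ≤ |Real.log (‖z‖)| := by
      rw [him, abs_div, abs_neg]
      have h2pi : (1:ℝ) ≤ |2 * π| := by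
        rw [abs_of_pos (by positivity)]
        nlinarith [Real.pi_gt_three]
      calc |Real.log (‖z‖)| / |2 * π| ≤ |Real.log (‖z‖)| / 1 :=
            div_le_div_of_nonneg_left (abs_nonneg _) one_pos h2pi |>.trans_eq (by ring) |>.trans
              (le_refl _)
        _ = _ := div_one _
    calc ‖F z‖ ≤ c₀ * (1 + |(Complex.log z / (2 * π * I)).im|) ^ k + c₂ := hGb _
      _ ≤ c₀ * (1 + |Real.log (‖z‖)|) ^ k + c₂ := by
          have := pow_le_pow_left₀ (by positivity)
            (add_le_add le_rfl h1 : 1 + |(Complex.log z / (2 * π * I)).im| ≤ _) k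
          nlinarith [this]
  -- removable singularity at 0
  have hnorm_t : Filter.Tendsto (fun z : ℂ => ‖z‖) (nhdsWithin (0:ℂ) {(0:ℂ)}ᶜ)
      (nhdsWithin (0:ℝ) (Set.Ioi 0)) := by
    rw [tendsto_nhdsWithin_iff]
    constructor
    · have : Filter.Tendsto (fun z : ℂ => ‖z‖) (nhds 0) (nhds ‖(0:ℂ)‖) :=
        continuous_norm.tendsto 0
      simpa using this.mono_left nhdsWithin_le_nhds
    · filter_upwards [self_mem_nhdsWithin] with w hw
      exact norm_pos_iff.mpr hw
  have ho : (fun z : ℂ => F z - F 0) =o[nhdsWithin (0:ℂ) {(0:ℂ)}ᶜ]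
      fun z : ℂ => (z - 0)⁻¹ := by
    rw [Asymptotics.isLittleO_iff]
    intro c hc
    have hT : Filter.Tendsto (fun z : ℂ => ‖F z - F 0‖ * ‖z‖)
        (nhdsWithin (0:ℂ) {(0:ℂ)}ᶜ) (nhds 0) := by
      apply squeeze_zero' (Filter.Eventually.of_forall fun z => by positivity)
      · show ∀ᶠ z in _, ‖F z - F 0‖ * ‖z‖ ≤
          (c₀ * (1 + |Real.log ‖z‖|) ^ k + (c₂ + ‖F 0‖)) * ‖z‖
        filter_upwards [self_mem_nhdsWithin] with z hz
        have hz' : z ≠ 0 := hz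
        have h1 : ‖F z - F 0‖ ≤ c₀ * (1 + |Real.log ‖z‖|) ^ k + (c₂ + ‖F 0‖) := by
          have h2 := hFb z hz'
          calc ‖F z - F 0‖ ≤ ‖F z‖ + ‖F 0‖ := norm_sub_le _ _
            _ ≤ _ := by linarith
        exact mul_le_mul_of_nonneg_right h1 (norm_nonneg _)
      · exact (aux_mul_log_pow_tendsto k c₀ (c₂ + ‖F 0‖)).comp hnorm_t
    filter_upwards [hT.eventually_le_const hc, self_mem_nhdsWithin] with z h1 h2
    have hz0 : (0:ℝ) < ‖z‖ := norm_pos_iff.mpr h2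
    rw [sub_zero, norm_inv]
    calc ‖F z - F 0‖ ≤ c / ‖z‖ := by rw [le_div_iff₀ hz0]; exact h1
      _ = c * ‖z‖⁻¹ := by rw [div_eq_mul_inv]
  have hF'd : Differentiable ℂ (Function.update F 0 (limUnder (nhdsWithin (0:ℂ) {(0:ℂ)}ᶜ) F)) := by
    have hd : DifferentiableOn ℂ F (Set.univ \ {0}) := fun w hw =>
      (hFd w hw.2).differentiableWithinAt
    have := Complex.differentiableOn_update_limUnder_of_isLittleO
      (Filter.univ_mem) hd ho
    rwa [differentiableOn_univ] at this
  set F' := Function.update F 0 (limUnder (nhdsWithin (0:ℂ) {(0:ℂ)}ᶜ) F) with hF'def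
  have hF'eq : ∀ z : ℂ, z ≠ 0 → F' z = F z := fun z hz => Function.update_of_ne hz _ _
  -- derivative vanishes everywhere
  have hderiv : ∀ z : ℂ, deriv F' z = 0 := by
    intro z
    have key : ∀ R : ℝ, max 1 (2 * (‖z‖ + 1)) ≤ R →
        ‖deriv F' z‖ ≤ (c₀ * (1 + Real.log (‖z‖ + R)) ^ k + c₂) / R := by
      intro R hR
      have hR1 : (1:ℝ) ≤ R := le_trans (le_max_left _ _) hR
      have hR2 : 2 * (‖z‖ + 1) ≤ R := le_trans (le_max_right _ _) hR
      have hR0 : (0:ℝ) < R := by linarith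
      apply Complex.norm_deriv_le_of_forall_mem_sphere_norm_le hR0 hF'd.diffContOnCl
      intro w hw
      have hwz : ‖w - z‖ = R := by
        rwa [Metric.mem_sphere, Complex.dist_eq] at hw
      have habs0 : (0:ℝ) ≤ ‖z‖ := norm_nonneg z
      have h1 : (1:ℝ) ≤ ‖w‖ := by
        have h3 : ‖w - z‖ ≤ ‖w‖ + ‖z‖ := by
          calc ‖w - z‖ ≤ ‖w‖ + ‖-z‖ := by
                simpa [sub_eq_add_neg] using norm_add_le w (-z)
            _ = ‖w‖ + ‖z‖ := by rw [norm_neg]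
        linarith
      have hw0 : w ≠ 0 := by
        intro hww
        rw [hww] at h1; simp at h1; linarith
      have h2 : ‖w‖ ≤ ‖z‖ + R := by
        have h3 : ‖w‖ ≤ ‖z‖ + ‖w - z‖ := by
          calc ‖w‖ = ‖z + (w - z)‖ := by ring_nf
            _ ≤ _ := norm_add_le _ _
        linarith [h3, hwz.le]
      rw [hF'eq w hw0]
      have h4 := hFb w hw0
      have h5 : |Real.log (‖w‖)| = Real.log (‖w‖) :=
        abs_of_nonneg (Real.log_nonneg h1)
      have h6 : Real.log (‖w‖) ≤ Real.log (‖z‖ + R) :=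
        Real.log_le_log (by linarith) h2
      have h7 : (1 + |Real.log (‖w‖)|) ^ k ≤ (1 + Real.log (‖z‖ + R)) ^ k := by
        apply pow_le_pow_left₀ (by positivity)
        rw [h5]; linarith
      calc ‖F w‖ ≤ c₀ * (1 + |Real.log (‖w‖)|) ^ k + c₂ := h4
        _ ≤ c₀ * (1 + Real.log (‖z‖ + R)) ^ k + c₂ := by nlinarith [h7]
    have hlim := aux_log_pow_div k c₀ c₂ (‖z‖)
    have hle : ‖deriv F' z‖ ≤ 0 := by
      apply ge_of_tendsto hlim
      filter_upwards [Filter.eventually_ge_atTop (max 1 (2 * (‖z‖ + 1)))] with R hR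
      exact key R hR
    simpa using le_antisymm hle (norm_nonneg _)
  have hconst := is_const_of_deriv_eq_zero hF'd hderiv
  intro s t
  rw [← hFeq s, ← hFeq t,
    ← hF'eq _ (Complex.exp_ne_zero _), ← hF'eq _ (Complex.exp_ne_zero _)]
  exact hconst _ _

open Filter Real Topology Finset in
theorem nearly_periodic_limit_at_infinity
    (a C : ℝ) (ha : 2 < a) (hC : 0 ≤ C) (k : ℕ) (X₀ : ℝ) (h : ℂ → ℂ)
    (hd : DifferentiableOn ℂ h {s : ℂ | X₀ < s.re})
    (h1 : ∀ s : ℂ, X₀ < s.re → ‖h (s + 1) - h s‖ ≤ C * ‖s‖ ^ (-a))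
    (h2 : ∀ s : ℂ, X₀ < s.re → ‖h s‖ ≤ C * (1 + |s.im|) ^ k) :
    ∃ lam : ℂ, ∃ K : ℝ, 0 ≤ K ∧
      (∀ s : ℂ, X₀ < s.re → X₀ + 2 ≤ s.re → 2 ≤ s.re →
        ‖h s - lam‖ ≤ K * (Real.log (2 + s.re)) ^ 2 * s.re ^ (1 - a)) ∧
      (∀ ε : ℝ, 0 < ε → ∃ X : ℝ, ∀ s : ℂ, X₀ < s.re → X ≤ s.re →
        ‖h s - lam‖ ≤ ε) := by
  have ha1 : (1:ℝ) < a := by linarith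
  set B : ℝ := max X₀ 0 with hB
  have hBX : X₀ ≤ B := le_max_left _ _
  have hB0 : (0:ℝ) ≤ B := le_max_right _ _
  set D : Set ℂ := {s : ℂ | B + 1 < s.re} with hD
  have hDopen : IsOpen D := isOpen_lt continuous_const Complex.continuous_re
  have hDre : ∀ s ∈ D, B + 1 < s.re := fun s hs => hs
  have hDsub : ∀ s ∈ D, X₀ < s.re := fun s hs => by
    have := hDre s hs; linarith
  have hmem : ∀ s ∈ D, ∀ n : ℕ, X₀ < (s + (n:ℂ)).re := by
    intro s hs n
    simp only [Complex.add_re, Complex.natCast_re]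
    have h3 := hDre s hs
    have h4 : (0:ℝ) ≤ (n:ℝ) := Nat.cast_nonneg n
    linarith
  set d : ℕ → ℂ → ℂ := fun n s => h (s + (n:ℂ) + 1) - h (s + (n:ℂ)) with hd_def
  -- uniform bound on D
  have hd_bound : ∀ (n : ℕ) (s : ℂ), s ∈ D → ‖d n s‖ ≤ C * ((1:ℝ) + n) ^ (-a) := by
    intro n s hs
    have hb := h1 (s + (n:ℂ)) (hmem s hs n)
    have h4 : (1:ℝ) + n ≤ ‖s + (n:ℂ)‖ := by
      have h5 := Complex.re_le_norm (s + (n:ℂ))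
      simp only [Complex.add_re, Complex.natCast_re] at h5
      have h6 := hDre s hs
      linarith
    have h3 : ‖s + (n:ℂ)‖ ^ (-a) ≤ ((1:ℝ) + n) ^ (-a) := by
      apply Real.rpow_le_rpow_of_nonpos (by positivity) h4 (by linarith)
    calc ‖d n s‖ ≤ C * ‖s + (n:ℂ)‖ ^ (-a) := hb
      _ ≤ C * ((1:ℝ) + n) ^ (-a) := mul_le_mul_of_nonneg_left h3 hC
  have hu_sum : Summable (fun n : ℕ => C * ((1:ℝ) + n) ^ (-a)) :=
    (aux_tsum_summable ha1 le_rfl).mul_left C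
  have hd_sum : ∀ s ∈ D, Summable (fun n => d n s) := fun s hs =>
    Summable.of_norm (hu_sum.of_nonneg_of_le (fun n => norm_nonneg _)
      (fun n => hd_bound n s hs))
  have hd_sum_norm : ∀ s ∈ D, Summable (fun n => ‖d n s‖) := fun s hs =>
    hu_sum.of_nonneg_of_le (fun n => norm_nonneg _) (fun n => hd_bound n s hs)
  set g : ℂ → ℂ := fun s => h s + ∑' n : ℕ, d n s with hg_def
  -- differentiability of g
  have hshift : ∀ c : ℂ, 0 ≤ c.re → DifferentiableOn ℂ (fun s => h (s + c)) D := by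
    intro c hc
    apply DifferentiableOn.comp hd ((differentiable_id.add_const c).differentiableOn)
    intro s hs
    simp only [Set.mem_setOf_eq, Complex.add_re, id]
    have := hDre s hs
    linarith
  have hg_diff : DifferentiableOn ℂ g D := by
    apply DifferentiableOn.add
    · exact hd.mono fun s hs => by
        simp only [Set.mem_setOf_eq]; exact hDsub s hs
    · apply Complex.differentiableOn_tsum_of_summable_norm hu_sum ?_ hDopen
        (fun n w hw => hd_bound n w hw)
      intro n
      have e1 : (fun s : ℂ => h (s + (n:ℂ) + 1)) = fun s => h (s + ((n:ℂ) + 1)) := by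
        funext s; rw [add_assoc]
      apply DifferentiableOn.sub
      · rw [show (fun s : ℂ => h (s + (n:ℂ) + 1)) = fun s => h (s + ((n:ℂ) + 1)) from e1]
        apply hshift
        simp only [Complex.add_re, Complex.natCast_re, Complex.one_re]
        positivity
      · apply hshift; simp only [Complex.natCast_re]; positivity
  -- periodicity of g on D
  have hgper : ∀ s ∈ D, g (s + 1) = g s := by
    intro s hs
    have hsum := hd_sum s hs
    have hzero := hsum.tsum_eq_zero_add
    have hindex : ∀ n : ℕ, d n (s + 1) = d (n + 1) s := by
      intro n
      simp only [hd_def]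
      push_cast
      ring_nf
    have hcong : ∑' n : ℕ, d n (s + 1) = ∑' n : ℕ, d (n + 1) s := tsum_congr hindex
    have hd0 : d 0 s = h (s + 1) - h s := by simp [hd_def]
    show h (s + 1) + ∑' n : ℕ, d n (s + 1) = h s + ∑' n : ℕ, d n s
    rw [hcong]
    have : ∑' n : ℕ, d (n + 1) s = (∑' n : ℕ, d n s) - d 0 s := by
      rw [hzero, hd0]; ring
    rw [this, hd0]
    ring
  -- tail bound
  have hgtail : ∀ s : ℂ, s ∈ D → 2 ≤ s.re →
      ‖g s - h s‖ ≤ (C * (1 + (a - 1)⁻¹)) * s.re ^ (1 - a) := by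
    intro s hs hs2
    have hnorm := hd_sum_norm s hs
    have hcomp : Summable (fun n : ℕ => C * (s.re + n) ^ (-a)) :=
      (aux_tsum_summable ha1 (by linarith : (1:ℝ) ≤ s.re)).mul_left C
    have hterm : ∀ n : ℕ, ‖d n s‖ ≤ C * (s.re + n) ^ (-a) := by
      intro n
      have hb := h1 (s + (n:ℂ)) (hmem s hs n)
      have h4 : s.re + n ≤ ‖s + (n:ℂ)‖ := by
        have h5 := Complex.re_le_norm (s + (n:ℂ))
        simpa only [Complex.add_re, Complex.natCast_re] using h5
      have hpos : (0:ℝ) < s.re + n := by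
        have : (0:ℝ) ≤ (n:ℝ) := Nat.cast_nonneg n
        linarith
      have h3 : ‖s + (n:ℂ)‖ ^ (-a) ≤ (s.re + n) ^ (-a) :=
        Real.rpow_le_rpow_of_nonpos hpos h4 (by linarith)
      exact hb.trans (mul_le_mul_of_nonneg_left h3 hC)
    have e0 : g s - h s = ∑' n : ℕ, d n s := by
      show h s + ∑' n : ℕ, d n s - h s = _
      ring
    rw [e0]
    calc ‖∑' n : ℕ, d n s‖ ≤ ∑' n : ℕ, ‖d n s‖ := norm_tsum_le_tsum_norm hnorm
      _ ≤ ∑' n : ℕ, C * (s.re + n) ^ (-a) := Summable.tsum_le_tsum hterm hnorm hcomp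
      _ = C * ∑' n : ℕ, (s.re + n) ^ (-a) := tsum_mul_left
      _ ≤ C * ((1 + (a - 1)⁻¹) * s.re ^ (1 - a)) :=
          mul_le_mul_of_nonneg_left (aux_tsum_le ha1 (by linarith)) hC
      _ = (C * (1 + (a - 1)⁻¹)) * s.re ^ (1 - a) := by ring
  -- crude bound
  set C₂ : ℝ := ∑' n : ℕ, C * ((1:ℝ) + n) ^ (-a) with hC₂
  have hC₂0 : 0 ≤ C₂ := tsum_nonneg fun n => by
    have : (0:ℝ) ≤ ((1:ℝ) + n) ^ (-a) := Real.rpow_nonneg (by positivity) _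
    positivity
  have hgB : ∀ s ∈ D, ‖g s‖ ≤ C * (1 + |s.im|) ^ k + C₂ := by
    intro s hs
    have hnorm := hd_sum_norm s hs
    have ht : ‖∑' n : ℕ, d n s‖ ≤ C₂ :=
      (norm_tsum_le_tsum_norm hnorm).trans
        (Summable.tsum_le_tsum (fun n => hd_bound n s hs) hnorm hu_sum)
    calc ‖g s‖ ≤ ‖h s‖ + ‖∑' n : ℕ, d n s‖ := norm_add_le _ _
      _ ≤ C * (1 + |s.im|) ^ k + C₂ := add_le_add (h2 s (hDsub s hs)) ht
  -- shift invariance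
  have hgn : ∀ s ∈ D, ∀ n : ℕ, g (s + (n:ℂ)) = g s := by
    intro s hs n
    induction n with
    | zero => simp
    | succ m ih =>
      have hsm : s + (m:ℂ) ∈ D := by
        simp only [hD, Set.mem_setOf_eq, Complex.add_re, Complex.natCast_re]
        have h3 := hDre s hs
        have h4 : (0:ℝ) ≤ (m:ℝ) := Nat.cast_nonneg m
        linarith
      have e1 : s + ((m + 1 : ℕ):ℂ) = (s + (m:ℂ)) + 1 := by push_cast; ring
      rw [e1, hgper _ hsm, ih]
  have hrep0 : ∀ (s : ℂ) (p q : ℕ), p ≤ q → B + 1 < s.re + p → g (s + (q:ℂ)) = g (s + (p:ℂ)) := by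
    intro s p q hpq hp
    have hspD : s + (p:ℂ) ∈ D := by
      simp only [hD, Set.mem_setOf_eq, Complex.add_re, Complex.natCast_re]
      exact hp
    have e1 : s + (q:ℂ) = (s + (p:ℂ)) + ((q - p : ℕ):ℂ) := by
      push_cast [Nat.cast_sub hpq]; ring
    rw [e1, hgn _ hspD]
  set NN : ℂ → ℕ := fun s => ⌈B + 2 - s.re⌉₊ with hNN
  have hNNge : ∀ s : ℂ, B + 2 ≤ s.re + NN s := by
    intro s
    have := Nat.le_ceil (B + 2 - s.re)
    have h4 : (⌈B + 2 - s.re⌉₊ : ℝ) = ((NN s : ℕ) : ℝ) := by rw [hNN]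
    linarith [this]
  set G : ℂ → ℂ := fun s => g (s + (NN s : ℂ)) with hG
  have hrep : ∀ (s : ℂ) (m : ℕ), B + 1 < s.re + m → G s = g (s + (m:ℂ)) := by
    intro s m hm
    have hns : B + 1 < s.re + NN s := by linarith [hNNge s]
    show g (s + (NN s : ℂ)) = g (s + (m:ℂ))
    rcases le_total m (NN s) with hle | hle
    · exact hrep0 s m (NN s) hle hm
    · exact (hrep0 s (NN s) m hle hns).symm
  have hGdiff : Differentiable ℂ G := by
    intro s₀
    set m : ℕ := NN s₀ + 2 with hm
    have hev : ∀ s ∈ Metric.ball s₀ 1, G s = g (s + (m:ℂ)) := by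
      intro s hsb
      apply hrep
      have h4 : |(s - s₀).re| ≤ ‖s - s₀‖ := Complex.abs_re_le_norm _
      have h5 : ‖s - s₀‖ < 1 := by
        rwa [Metric.mem_ball, Complex.dist_eq] at hsb
      have h6 : s₀.re - 1 < s.re := by
        have h45 := abs_lt.mp (lt_of_le_of_lt h4 h5)
        simp only [Complex.sub_re] at h45
        linarith [h45.1]
      have h7 := hNNge s₀
      have h8 : (m:ℝ) = (NN s₀ : ℝ) + 2 := by rw [hm]; push_cast; ring
      rw [h8]
      linarith
    have hmemD : (s₀ + (m:ℂ)) ∈ D := by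
      simp only [hD, Set.mem_setOf_eq, Complex.add_re, Complex.natCast_re]
      have h7 := hNNge s₀
      have h8 : (m:ℝ) = (NN s₀ : ℝ) + 2 := by rw [hm]; push_cast; ring
      rw [h8]
      linarith
    have hDm : DifferentiableAt ℂ (fun s => g (s + (m:ℂ))) s₀ :=
      (hg_diff.differentiableAt (hDopen.mem_nhds hmemD)).comp s₀
        ((differentiable_id.add_const ((m:ℂ))).differentiableAt)
    apply hDm.congr_of_eventuallyEq
    filter_upwards [Metric.ball_mem_nhds s₀ one_pos] with s hs
    exact hev s hs
  have hGper : ∀ s, G (s + 1) = G s := by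
    intro s
    set m : ℕ := NN s + 1 with hm
    have h3 := hNNge s
    have h8 : (m:ℝ) = (NN s : ℝ) + 1 := by rw [hm]; push_cast; ring
    have e1 : G (s + 1) = g ((s + 1) + (m:ℂ)) := by
      apply hrep
      simp only [Complex.add_re, Complex.one_re]
      rw [h8]; linarith
    have e2 : G s = g (s + ((m + 1 : ℕ):ℂ)) := by
      apply hrep
      push_cast
      linarith
    rw [e1, e2]
    congr 1
    push_cast
    ring
  have hGb : ∀ s, ‖G s‖ ≤ C * (1 + |s.im|) ^ k + C₂ := by
    intro s
    have hmemD : s + ((NN s : ℕ):ℂ) ∈ D := by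
      simp only [hD, Set.mem_setOf_eq, Complex.add_re, Complex.natCast_re]
      linarith [hNNge s]
    have := hgB _ hmemD
    simpa only [Complex.add_im, Complex.natCast_im, add_zero] using this
  have hconst := periodic_growth_constant G hGdiff hGper C C₂ k hC hC₂0 hGb
  set lam : ℂ := G 0 with hlam
  set K : ℝ := C * (1 + (a - 1)⁻¹) with hK
  have hK0 : 0 ≤ K := by
    have : (0:ℝ) ≤ (a - 1)⁻¹ := inv_nonneg.mpr (by linarith)
    rw [hK]
    nlinarith
  have hfinal : ∀ s : ℂ, X₀ + 2 ≤ s.re → 2 ≤ s.re →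
      ‖h s - lam‖ ≤ K * s.re ^ (1 - a) := by
    intro s hs1 hs2
    have hBs : B + 2 ≤ s.re := by
      have : B ≤ s.re - 2 := max_le (by linarith) (by linarith)
      linarith
    have hsD : s ∈ D := by
      simp only [hD, Set.mem_setOf_eq]; linarith
    have hGs : G s = g s := by
      have := hrep s 0 (by push_cast; linarith)
      simpa using this
    have hls : lam = g s := by rw [hlam, hconst 0 s, hGs]
    have e3 : h s - lam = -(g s - h s) := by rw [hls]; ring
    rw [e3, norm_neg]
    exact hgtail s hsD hs2
  refine ⟨lam, K, hK0, ?_, ?_⟩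
  · intro s _ hs1 hs2
    have hb := hfinal s hs1 hs2
    have hlog : 1 ≤ Real.log (2 + s.re) := by
      rw [Real.le_log_iff_exp_le (by linarith)]
      have := Real.exp_one_lt_d9
      linarith
    have hr0 : (0:ℝ) ≤ s.re ^ (1 - a) := Real.rpow_nonneg (by linarith) _
    have hsq : 1 ≤ (Real.log (2 + s.re)) ^ 2 := by nlinarith
    calc ‖h s - lam‖ ≤ K * s.re ^ (1 - a) := hb
      _ ≤ K * (Real.log (2 + s.re)) ^ 2 * s.re ^ (1 - a) :=
          mul_le_mul_of_nonneg_right (le_mul_of_one_le_right hK0 hsq) hr0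
  · intro ε hε
    have hlim : Tendsto (fun x : ℝ => K * x ^ (1 - a)) atTop (𝓝 0) := by
      have h4 := (tendsto_rpow_neg_atTop (by linarith : (0:ℝ) < a - 1)).const_mul K
      rw [mul_zero] at h4
      have e4 : (fun x : ℝ => K * x ^ (1 - a)) = fun x : ℝ => K * x ^ (-(a - 1)) := by
        funext x; rw [show (1 - a) = -(a - 1) by ring]
      rw [e4]
      exact h4
    obtain ⟨X₁, hX₁⟩ := eventually_atTop.mp (hlim.eventually_lt_const hε)
    refine ⟨max X₁ (max (X₀ + 2) 2), fun s _ hsX => ?_⟩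
    have hx1 : X₁ ≤ s.re := le_trans (le_max_left _ _) hsX
    have hx2 : X₀ + 2 ≤ s.re := le_trans ((le_max_left _ _).trans (le_max_right _ _)) hsX
    have hx3 : (2:ℝ) ≤ s.re := le_trans ((le_max_right _ _).trans (le_max_right _ _)) hsX
    exact (hfinal s hx2 hx3).trans (hX₁ s.re hx1).le
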